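/- Let ι be a countable index set and F = {f_i(x) = a_i x + b_i : i ∈ ι} a set of real affine functions with a_i ≥ 1 and b_i ≥ 0. Let σ > 0 be such that α = ∑_{i ∈ ι} 1/a_i^σ < 1 (the sum converging). Let S be a discrete subset of the positive reals such that ∑_{s ∈ S, s ≤ x} s^{-σ} is finite for each x. Then for every x ≥ 1, the number of pairs (w, s), where w is a finite word over ι, s ∈ S, and f_w(s) ≤ x, is at most (1/(1-α)) · (∑_{s ∈ S, 0 < s ≤ x} s^{-σ}) · x^σ. -/

import Mathlib

/-- **Erdős–Lagarias upper bound.**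
For a countable family of affine maps `f i = a i * x + b i` with `a i ≥ 1`, `b i ≥ 0`,
an exponent `σ > 0` with `α = ∑ 1/(a i)^σ < 1`, and a discrete set `S` of positive reals,
the number of pairs `(w, s)` of a finite word `w` and `s ∈ S` with `f_w(s) ≤ x` is at most
`(1/(1-α)) · (∑_{s ∈ S, 0 < s ≤ x} s^{-σ}) · x^σ`. -/
theorem stmt_0 {ι : Type*} [Countable ι] (a b : ι → ℝ)
    (ha : ∀ i, 1 ≤ a i) (hb : ∀ i, 0 ≤ b i)
    (σ : ℝ) (hσ : 0 < σ)
    (hsummable : Summable fun i => 1 / (a i) ^ σ)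
    (hα : (∑' i, 1 / (a i) ^ σ) < 1)
    (S : Set ℝ) (hSpos : ∀ s ∈ S, 0 < s)
    (hSdisc : ∀ c : ℝ, ¬ AccPt c (Filter.principal S))
    (hSsum : ∀ x : ℝ, Summable fun s : ↥(S ∩ Set.Icc 0 x) => (s : ℝ) ^ (-σ))
    (x : ℝ) (hx : 1 ≤ x) :
    {p : List ι × ℝ | p.2 ∈ S ∧ p.1.foldr (fun i y => a i * y + b i) p.2 ≤ x}.Finite ∧
    ({p : List ι × ℝ | p.2 ∈ S ∧ p.1.foldr (fun i y => a i * y + b i) p.2 ≤ x}.ncard : ℝ) ≤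
      1 / (1 - ∑' i, 1 / (a i) ^ σ) *
        (∑' s : ↥(S ∩ Set.Icc 0 x), (s : ℝ) ^ (-σ)) * x ^ σ := by
  classical
  set T := {p : List ι × ℝ | p.2 ∈ S ∧ p.1.foldr (fun i y => a i * y + b i) p.2 ≤ x} with hTdef
  have hapos : ∀ i, 0 < a i := fun i => lt_of_lt_of_le one_pos (ha i)
  have hq0 : ∀ i, 0 ≤ 1 / (a i) ^ σ := fun i =>
    div_nonneg zero_le_one (Real.rpow_pos_of_pos (hapos i) σ).le
  set αr := ∑' i, 1 / (a i) ^ σ with hαr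
  have hαr0 : 0 ≤ αr := tsum_nonneg hq0
  have h1α : 0 < 1 - αr := by linarith
  set c : ι → ENNReal := fun i => ENNReal.ofReal (1 / (a i) ^ σ) with hc
  have hαc : ∑' i, c i = ENNReal.ofReal αr :=
    (ENNReal.ofReal_tsum_of_nonneg hq0 hsummable).symm
  -- list product facts
  have hprod1 : ∀ w : List ι, 1 ≤ (w.map a).prod := by
    intro w; induction w with
    | nil => simp
    | cons i w ih =>
      simp only [List.map_cons, List.prod_cons]
      nlinarith [ha i]
  have hprodpos : ∀ w : List ι, 0 < (w.map a).prod :=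
    fun w => lt_of_lt_of_le one_pos (hprod1 w)
  have hfold : ∀ (w : List ι) (s : ℝ), 0 ≤ s →
      (w.map a).prod * s ≤ w.foldr (fun i y => a i * y + b i) s := by
    intro w; induction w with
    | nil => intro s _; simp
    | cons i w ih =>
      intro s hs
      simp only [List.map_cons, List.prod_cons, List.foldr_cons]
      have h1 := ih s hs
      nlinarith [hapos i, hb i, hprodpos w]
  have hqprod : ∀ w : List ι,
      ((w.map a).prod) ^ (-σ) = (w.map (fun i => 1 / (a i) ^ σ)).prod := by
    intro w; induction w with
    | nil => simp
    | cons i w ih =>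
      simp only [List.map_cons, List.prod_cons, ← ih]
      rw [Real.mul_rpow (hapos i).le (hprodpos w).le, Real.rpow_neg (hapos i).le, one_div]
  have hqprodnn : ∀ w : List ι, 0 ≤ (w.map (fun i => 1 / (a i) ^ σ)).prod := by
    intro w; rw [← hqprod w]; exact Real.rpow_nonneg (hprodpos w).le _
  have hcprod : ∀ w : List ι,
      (w.map c).prod = ENNReal.ofReal ((w.map (fun i => 1 / (a i) ^ σ)).prod) := by
    intro w; induction w with
    | nil => simp
    | cons i w ih =>
      simp only [List.map_cons, List.prod_cons, ih]
      rw [← ENNReal.ofReal_mul (hq0 i)]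
  -- geometric sum over all words
  have hFin : ∀ n : ℕ, (∑' v : Fin n → ι, ∏ j, c (v j)) = (∑' i, c i) ^ n := by
    intro n; induction n with
    | zero =>
      rw [tsum_eq_single (fun j : Fin 0 => j.elim0)
        (fun v hv => absurd (Subsingleton.elim v _) hv)]
      simp
    | succ n ih =>
      rw [← (Fin.consEquiv (fun _ : Fin (n+1) => ι)).tsum_eq fun v => ∏ j, c (v j)]
      rw [ENNReal.tsum_prod']
      have key : ∀ (i : ι) (v : Fin n → ι),
          (∏ j, c ((Fin.consEquiv (fun _ : Fin (n+1) => ι)) (i, v) j)) =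
            c i * ∏ j, c (v j) := by
        intro i v
        rw [Fin.prod_univ_succ]
        simp [Fin.consEquiv]
      simp_rw [key, ENNReal.tsum_mul_left, ih, ENNReal.tsum_mul_right]
      rw [pow_succ']
  have hL : (∑' w : List ι, (w.map c).prod) = (1 - ENNReal.ofReal αr)⁻¹ := by
    calc (∑' w : List ι, (w.map c).prod)
        = ∑' p : Σ n, Fin n → ι, (((List.equivSigmaTuple (α := ι)).symm p).map c).prod :=
          ((List.equivSigmaTuple (α := ι)).symm.tsum_eq _).symm
      _ = ∑' (n : ℕ) (v : Fin n → ι), (((List.ofFn v)).map c).prod :=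
          ENNReal.tsum_sigma' _
      _ = ∑' (n : ℕ) (v : Fin n → ι), ∏ j, c (v j) := by
          simp [List.map_ofFn, List.prod_ofFn, Function.comp]
      _ = ∑' n : ℕ, (∑' i, c i) ^ n := by
          exact tsum_congr fun n => hFin n
      _ = (1 - ∑' i, c i)⁻¹ := ENNReal.tsum_geometric _
      _ = (1 - ENNReal.ofReal αr)⁻¹ := by rw [hαc]
  -- the S side
  set Br := ∑' s : ↥(S ∩ Set.Icc 0 x), (s : ℝ) ^ (-σ) with hBrdef
  have hBnn : ∀ s : ↥(S ∩ Set.Icc 0 x), 0 ≤ (s : ℝ) ^ (-σ) :=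
    fun s => Real.rpow_nonneg s.2.2.1 _
  have hBr0 : 0 ≤ Br := tsum_nonneg hBnn
  have hB' : (∑' s : ↥(S ∩ Set.Icc 0 x), ENNReal.ofReal ((s : ℝ) ^ (-σ))) =
      ENNReal.ofReal Br := (ENNReal.ofReal_tsum_of_nonneg hBnn (hSsum x)).symm
  have hsub : (1 : ENNReal) - ENNReal.ofReal αr = ENNReal.ofReal (1 - αr) := by
    rw [ENNReal.ofReal_sub _ hαr0, ENNReal.ofReal_one]
  have hC : (∑' p : List ι × ↥(S ∩ Set.Icc 0 x),
        (p.1.map c).prod * ENNReal.ofReal ((p.2 : ℝ) ^ (-σ)))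
      = ENNReal.ofReal ((1 - αr)⁻¹) * ENNReal.ofReal Br := by
    rw [ENNReal.tsum_prod']
    simp_rw [ENNReal.tsum_mul_left]
    rw [hB', ENNReal.tsum_mul_right, hL]
    congr 1
    rw [hsub, ← ENNReal.ofReal_inv_of_pos h1α]
  -- pointwise bound
  have key : ∀ p : List ι × ℝ, p ∈ T →
      ENNReal.ofReal (x ^ (-σ)) ≤ (p.1.map c).prod * ENNReal.ofReal (p.2 ^ (-σ)) := by
    intro p hp
    obtain ⟨hs, hfx⟩ := hp
    have hs0 : 0 < p.2 := hSpos _ hs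
    have h1 : (p.1.map a).prod * p.2 ≤ x := le_trans (hfold p.1 p.2 hs0.le) hfx
    have h2 : 0 < (p.1.map a).prod * p.2 := mul_pos (hprodpos _) hs0
    have h3 : x ^ (-σ) ≤ ((p.1.map a).prod * p.2) ^ (-σ) :=
      Real.rpow_le_rpow_of_nonpos h2 h1 (neg_nonpos.2 hσ.le)
    have h4 : ((p.1.map a).prod * p.2) ^ (-σ)
        = (p.1.map (fun i => 1 / (a i) ^ σ)).prod * p.2 ^ (-σ) := by
      rw [Real.mul_rpow (hprodpos _).le hs0.le, hqprod]
    rw [hcprod, ← ENNReal.ofReal_mul (hqprodnn _)]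
    exact ENNReal.ofReal_le_ofReal (by rw [← h4]; exact h3)
  have hmem : ∀ p : List ι × ℝ, p ∈ T → p.2 ∈ S ∩ Set.Icc 0 x := by
    intro p hp
    obtain ⟨hs, hfx⟩ := hp
    have hs0 : 0 < p.2 := hSpos _ hs
    have h1 := hfold p.1 p.2 hs0.le
    have h2 := hprod1 p.1
    exact ⟨hs, ⟨hs0.le, by nlinarith⟩⟩
  set e : ↥T → List ι × ↥(S ∩ Set.Icc 0 x) :=
    fun p => (p.1.1, ⟨p.1.2, hmem p.1 p.2⟩) with hedef
  have hinj : Function.Injective e := by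
    intro p q h
    apply Subtype.ext
    have h1 : p.1.1 = q.1.1 := congrArg (fun z : List ι × ↥(S ∩ Set.Icc 0 x) => z.1) h
    have h2 : p.1.2 = q.1.2 := congrArg (fun z : List ι × ↥(S ∩ Set.Icc 0 x) => (z.2 : ℝ)) h
    exact Prod.ext h1 h2
  -- main inequality in ENNReal
  have main : T.encard * ENNReal.ofReal (x ^ (-σ)) ≤
      ENNReal.ofReal ((1 - αr)⁻¹) * ENNReal.ofReal Br := by
    rw [← ENNReal.tsum_set_const]
    calc (∑' _ : ↥T, ENNReal.ofReal (x ^ (-σ)))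
        ≤ ∑' p : ↥T, ((e p).1.map c).prod * ENNReal.ofReal (((e p).2 : ℝ) ^ (-σ)) :=
          ENNReal.tsum_le_tsum fun p => key p.1 p.2
      _ ≤ ∑' q : List ι × ↥(S ∩ Set.Icc 0 x),
            (q.1.map c).prod * ENNReal.ofReal ((q.2 : ℝ) ^ (-σ)) :=
          ENNReal.tsum_comp_le_tsum_of_injective hinj _
      _ = _ := hC
  have hx0 : (0 : ℝ) < x := lt_of_lt_of_le one_pos hx
  have hε : ENNReal.ofReal (x ^ (-σ)) ≠ 0 := by
    rw [Ne, ENNReal.ofReal_eq_zero, not_le]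
    positivity
  have hRfin : ENNReal.ofReal ((1 - αr)⁻¹) * ENNReal.ofReal Br ≠ ⊤ :=
    ENNReal.mul_ne_top ENNReal.ofReal_ne_top ENNReal.ofReal_ne_top
  have hne : T.encard * ENNReal.ofReal (x ^ (-σ)) ≠ ⊤ := ne_top_of_le_ne_top hRfin main
  have hTfin : T.Finite := by
    refine Set.encard_ne_top_iff.mp ?_
    intro h
    rw [h] at hne
    simp only [ENat.toENNReal_top] at hne
    rw [ENNReal.top_mul hε] at hne
    exact hne rfl
  refine ⟨hTfin, ?_⟩
  -- convert cardinalities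
  have hcard : (T.encard : ENNReal) = ((T.ncard : ℕ) : ENNReal) := by
    rw [hTfin.encard_eq_coe_toFinset_card]
    have : T.ncard = hTfin.toFinset.card := by
      rw [Set.ncard_eq_toFinset_card T hTfin]
    rw [this]
    simp
  rw [hcard] at main
  have hreal : (T.ncard : ℝ) * x ^ (-σ) ≤ (1 - αr)⁻¹ * Br := by
    have lhs : ENNReal.ofReal ((T.ncard : ℝ) * x ^ (-σ)) =
        ((T.ncard : ℕ) : ENNReal) * ENNReal.ofReal (x ^ (-σ)) := by
      rw [ENNReal.ofReal_mul (by positivity), ENNReal.ofReal_natCast]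
    have rhs : ENNReal.ofReal ((1 - αr)⁻¹ * Br) =
        ENNReal.ofReal ((1 - αr)⁻¹) * ENNReal.ofReal Br :=
      ENNReal.ofReal_mul (by positivity)
    have := main
    rw [← lhs, ← rhs] at this
    exact (ENNReal.ofReal_le_ofReal_iff (by positivity)).mp this
  have hxσ : (0 : ℝ) < x ^ σ := Real.rpow_pos_of_pos hx0 σ
  have hsplit : (T.ncard : ℝ) = ((T.ncard : ℝ) * x ^ (-σ)) * x ^ σ := by
    rw [mul_assoc, ← Real.rpow_add hx0, neg_add_cancel, Real.rpow_zero, mul_one]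
  calc (T.ncard : ℝ) = ((T.ncard : ℝ) * x ^ (-σ)) * x ^ σ := hsplit
    _ ≤ ((1 - αr)⁻¹ * Br) * x ^ σ := mul_le_mul_of_nonneg_right hreal hxσ.le
    _ = 1 / (1 - αr) * Br * x ^ σ := by rw [one_div]
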